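/- Let μ₀ be a Borel probability measure on ℝ whose distribution function F₀ is continuous and strictly increasing on ℝ (hence invertible), let α∈(0,1), and for ε>0 with ε < min(α, 1-α) let 𝓛_ε = {μ : sup_{x∈ℝ}|F_μ(x) − F₀(x)| ≤ ε} be the Kolmogorov ε-ball around μ₀. Then sup_{μ∈𝓛_ε} VaR_α(μ) = −F₀⁻¹(α−ε) and inf_{μ∈𝓛_ε} VaR_α(μ) = −F₀⁻¹(α+ε). Consequently, if F₀ has a density f₀ that is continuous and strictly positive at F₀⁻¹(α), then the local measure of model risk satisfies LM = lim_{ε→0} (sup_{μ∈𝓛_ε}VaR_α(μ) − VaR_α(μ₀)) / (sup_{μ∈𝓛_ε}VaR_α(μ) − inf_{μ∈𝓛_ε}VaR_α(μ)) = 1/2. -/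

import Mathlib

open MeasureTheory Set Filter
open Topology

/-- The distribution function of a measure: `F_μ(x) = μ((-∞, x])`. -/
noncomputable def distFun (μ : Measure ℝ) (x : ℝ) : ℝ := (μ (Iic x)).toReal

/-- The lower quantile of order `α`: `q_α(μ) = inf {x : F_μ(x) ≥ α}`.
When the distribution function of `μ` is continuous and strictly increasing,
this is its inverse evaluated at `α`. -/
noncomputable def lowerQuantile (μ : Measure ℝ) (α : ℝ) : ℝ :=
  sInf {x : ℝ | α ≤ distFun μ x}

/-- The Value-at-Risk of order `α`: `VaR_α(μ) = -q_α(μ)`. -/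
noncomputable def VaR (μ : Measure ℝ) (α : ℝ) : ℝ := - lowerQuantile μ α

lemma distFun_nonneg (μ : Measure ℝ) (x : ℝ) : 0 ≤ distFun μ x := ENNReal.toReal_nonneg

lemma distFun_le_one (μ : Measure ℝ) [IsProbabilityMeasure μ] (x : ℝ) : distFun μ x ≤ 1 := by
  have h : μ (Iic x) ≤ 1 := prob_le_one
  calc (μ (Iic x)).toReal ≤ (1 : ENNReal).toReal := ENNReal.toReal_mono (by simp) h
  _ = 1 := by simp

lemma distFun_mono (μ : Measure ℝ) [IsProbabilityMeasure μ] : Monotone (distFun μ) :=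
  fun x y h => ENNReal.toReal_mono (measure_ne_top μ _) (measure_mono (Iic_subset_Iic.2 h))

lemma distFun_tendsto_atBot (μ : Measure ℝ) [IsProbabilityMeasure μ] :
    Tendsto (distFun μ) atBot (𝓝 0) := by
  have h : Tendsto (fun x : ℝ => μ (Iic x)) atBot (𝓝 (μ (⋂ x : ℝ, Iic x))) :=
    tendsto_measure_iInter_atBot (fun _ => measurableSet_Iic.nullMeasurableSet)
      (fun i j h => Iic_subset_Iic.2 h) ⟨0, measure_ne_top _ _⟩
  have he : (⋂ x : ℝ, Iic x) = (∅ : Set ℝ) := by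
    ext y
    simp only [mem_iInter, mem_Iic, mem_empty_iff_false, iff_false]
    push_neg
    exact ⟨y - 1, by linarith⟩
  rw [he, measure_empty] at h
  have := (ENNReal.tendsto_toReal (by simp : (0:ENNReal) ≠ ⊤)).comp h
  exact this

lemma distFun_tendsto_atTop (μ : Measure ℝ) [IsProbabilityMeasure μ] :
    Tendsto (distFun μ) atTop (𝓝 1) := by
  have h := tendsto_measure_Iic_atTop μ
  rw [measure_univ] at h
  have := (ENNReal.tendsto_toReal (by simp : (1:ENNReal) ≠ ⊤)).comp h
  exact this

lemma lowerQuantile_eq (μ₀ : Measure ℝ) (hmono : StrictMono (distFun μ₀))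
    {β x : ℝ} (hx : distFun μ₀ x = β) : lowerQuantile μ₀ β = x := by
  unfold lowerQuantile
  have : {y | β ≤ distFun μ₀ y} = Ici x := by
    ext y
    simp [← hx, hmono.le_iff_le, mem_Ici]
  rw [this, csInf_Ici]

lemma exists_distFun_eq (μ₀ : Measure ℝ) [IsProbabilityMeasure μ₀]
    (hcont : Continuous (distFun μ₀)) (hmono : StrictMono (distFun μ₀))
    {β : ℝ} (hβ : β ∈ Ioo (0:ℝ) 1) : ∃ x, distFun μ₀ x = β := by
  obtain ⟨a, ha⟩ : ∃ a, distFun μ₀ a < β :=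
    ((distFun_tendsto_atBot μ₀).eventually_lt_const hβ.1).exists
  obtain ⟨b, hb⟩ : ∃ b, β < distFun μ₀ b :=
    ((distFun_tendsto_atTop μ₀).eventually_const_lt hβ.2).exists
  have hab : a ≤ b := (hmono.lt_iff_lt.1 (ha.trans hb)).le
  obtain ⟨x, _, hx⟩ := intermediate_value_Icc hab hcont.continuousOn
    (show β ∈ Icc (distFun μ₀ a) (distFun μ₀ b) from ⟨ha.le, hb.le⟩)
  exact ⟨x, hx⟩

lemma distFun_lowerQuantile (μ₀ : Measure ℝ) [IsProbabilityMeasure μ₀]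
    (hcont : Continuous (distFun μ₀)) (hmono : StrictMono (distFun μ₀))
    {β : ℝ} (hβ : β ∈ Ioo (0:ℝ) 1) : distFun μ₀ (lowerQuantile μ₀ β) = β := by
  obtain ⟨x, hx⟩ := exists_distFun_eq μ₀ hcont hmono hβ
  rw [lowerQuantile_eq μ₀ hmono hx]
  exact hx

lemma continuousAt_lowerQuantile (μ₀ : Measure ℝ) [IsProbabilityMeasure μ₀]
    (hcont : Continuous (distFun μ₀)) (hmono : StrictMono (distFun μ₀))
    {α : ℝ} (hα : α ∈ Ioo (0:ℝ) 1) : ContinuousAt (lowerQuantile μ₀) α := by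
  have hq : ∀ β ∈ Ioo (0:ℝ) 1, distFun μ₀ (lowerQuantile μ₀ β) = β := fun β hβ =>
    distFun_lowerQuantile μ₀ hcont hmono hβ
  rw [ContinuousAt]
  apply tendsto_order.2
  constructor
  · intro a ha
    have hFa : distFun μ₀ a < α := by
      have := hmono ha
      rwa [hq α hα] at this
    have hU : (Ioo (distFun μ₀ a) 1 ∩ Ioo 0 1) ∈ 𝓝 α :=
      ((isOpen_Ioo.inter isOpen_Ioo).mem_nhds ⟨⟨hFa, hα.2⟩, hα⟩)
    filter_upwards [hU] with β hβ
    have : distFun μ₀ a < distFun μ₀ (lowerQuantile μ₀ β) := by rw [hq β hβ.2]; exact hβ.1.1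
    exact hmono.lt_iff_lt.1 this
  · intro b hb
    have hFb : α < distFun μ₀ b := by
      have := hmono hb
      rwa [hq α hα] at this
    have hU : (Ioo 0 (distFun μ₀ b) ∩ Ioo 0 1) ∈ 𝓝 α :=
      ((isOpen_Ioo.inter isOpen_Ioo).mem_nhds ⟨⟨hα.1, hFb⟩, hα⟩)
    filter_upwards [hU] with β hβ
    have : distFun μ₀ (lowerQuantile μ₀ β) < distFun μ₀ b := by rw [hq β hβ.2]; exact hβ.1.2
    exact hmono.lt_iff_lt.1 this

/-- Witness distribution function: jumps from `max (F x - ε) 0` to `min (F x + ε) 1` at `c`. -/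
noncomputable def wit (μ₀ : Measure ℝ) (ε c : ℝ) (hε : 0 ≤ ε)
    (hcont : Continuous (distFun μ₀)) (hm : Monotone (distFun μ₀))
    (h1 : ∀ x, distFun μ₀ x ≤ 1) : StieltjesFunction ℝ where
  toFun x := if x < c then max (distFun μ₀ x - ε) 0 else min (distFun μ₀ x + ε) 1
  mono' := by
    intro x y hxy
    by_cases hx : x < c <;> by_cases hy : y < c <;> simp only [if_pos, if_neg, hx, hy]
    · exact max_le_max (by linarith [hm hxy]) le_rfl
    · refine max_le (le_min (by linarith [hm hxy]) (by linarith [h1 x])) (le_min ?_ zero_le_one)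
      have := distFun_nonneg μ₀ y; linarith
    · exact absurd (lt_of_le_of_lt hxy hy) hx
    · exact min_le_min (by linarith [hm hxy]) le_rfl
  right_continuous' := by
    intro x
    by_cases hx : x < c
    · have hcw : ContinuousWithinAt (fun t => max (distFun μ₀ t - ε) 0) (Ici x) x :=
        ((hcont.sub continuous_const).max continuous_const).continuousWithinAt
      refine hcw.congr_of_eventuallyEq ?_ (by simp [hx])
      filter_upwards [Ico_mem_nhdsGE_of_mem (left_mem_Ico.2 hx)] with t ht
      simp [ht.2]
    · have hcw : ContinuousWithinAt (fun t => min (distFun μ₀ t + ε) 1) (Ici x) x :=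
        ((hcont.add continuous_const).min continuous_const).continuousWithinAt
      refine hcw.congr_of_eventuallyEq ?_ (by simp [hx])
      filter_upwards [self_mem_nhdsWithin] with t (ht : x ≤ t)
      have : ¬ t < c := fun h => hx (lt_of_le_of_lt ht h)
      simp [this]

lemma wit_apply (μ₀ : Measure ℝ) (ε c : ℝ) (hε : 0 ≤ ε) (hcont) (hm) (h1) (x : ℝ) :
    wit μ₀ ε c hε hcont hm h1 x
      = if x < c then max (distFun μ₀ x - ε) 0 else min (distFun μ₀ x + ε) 1 := rfl

lemma wit_nonneg (μ₀ : Measure ℝ) (ε c : ℝ) (hε : 0 ≤ ε) (hcont) (hm) (h1) (x : ℝ) :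
    0 ≤ wit μ₀ ε c hε hcont hm h1 x := by
  rw [wit_apply]
  split
  · exact le_max_right _ _
  · exact le_min (add_nonneg (distFun_nonneg μ₀ x) hε) zero_le_one

/-- The witness measure: a probability measure within Kolmogorov distance `ε` of `μ₀`
whose lower `α`-quantile equals `c`, for any `c` between the `(α-ε)`- and `(α+ε)`-quantiles
of `μ₀`. -/
lemma wit_spec (μ₀ : Measure ℝ) [IsProbabilityMeasure μ₀] (hcont : Continuous (distFun μ₀))
    (hmono : StrictMono (distFun μ₀)) {α ε c : ℝ} (hα : α ∈ Ioo (0:ℝ) 1)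
    (hε : 0 < ε) (hεα : ε < min α (1 - α))
    (hc1 : lowerQuantile μ₀ (α - ε) ≤ c) (hc2 : c ≤ lowerQuantile μ₀ (α + ε)) :
    ∃ ν : Measure ℝ, IsProbabilityMeasure ν ∧ (∀ x, |distFun ν x - distFun μ₀ x| ≤ ε) ∧
      lowerQuantile ν α = c := by
  obtain ⟨hεa, hεa'⟩ := lt_min_iff.1 hεα
  have hmem1 : α - ε ∈ Ioo (0:ℝ) 1 := ⟨by linarith, by linarith [hα.2]⟩
  have hmem2 : α + ε ∈ Ioo (0:ℝ) 1 := ⟨by linarith [hα.1], by linarith⟩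
  have hF1 : distFun μ₀ (lowerQuantile μ₀ (α - ε)) = α - ε :=
    distFun_lowerQuantile μ₀ hcont hmono hmem1
  have hF2 : distFun μ₀ (lowerQuantile μ₀ (α + ε)) = α + ε :=
    distFun_lowerQuantile μ₀ hcont hmono hmem2
  set W := wit μ₀ ε c hε.le hcont hmono.monotone (distFun_le_one μ₀) with hW
  have hbot : Tendsto W atBot (𝓝 0) := by
    have h1 : Tendsto (fun x => max (distFun μ₀ x - ε) 0) atBot (𝓝 (max (0 - ε) 0)) :=
      ((distFun_tendsto_atBot μ₀).sub_const ε).max tendsto_const_nhds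
    have h2 : max (0 - ε) 0 = 0 := max_eq_right (by linarith)
    rw [h2] at h1
    refine h1.congr' ?_
    filter_upwards [eventually_lt_atBot c] with x hx
    rw [wit_apply, if_pos hx]
  have htop : Tendsto W atTop (𝓝 1) := by
    have h1 : Tendsto (fun x => min (distFun μ₀ x + ε) 1) atTop (𝓝 (min (1 + ε) 1)) :=
      ((distFun_tendsto_atTop μ₀).add_const ε).min tendsto_const_nhds
    have h2 : min (1 + ε) 1 = 1 := min_eq_right (by linarith)
    rw [h2] at h1
    refine h1.congr' ?_
    filter_upwards [eventually_ge_atTop c] with x hx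
    rw [wit_apply, if_neg (not_lt.2 hx)]
  have hdW : ∀ x, distFun W.measure x = W x := by
    intro x
    rw [distFun, W.measure_Iic hbot x, sub_zero, ENNReal.toReal_ofReal (wit_nonneg _ _ _ _ _ _ _ x)]
  refine ⟨W.measure, W.isProbabilityMeasure hbot htop, ?_, ?_⟩
  · intro x
    rw [hdW x, wit_apply, abs_le]
    have h0 := distFun_nonneg μ₀ x
    have h1 := distFun_le_one μ₀ x
    split
    · constructor
      · have := le_max_left (distFun μ₀ x - ε) 0; linarith
      · have : max (distFun μ₀ x - ε) 0 ≤ distFun μ₀ x := max_le (by linarith) h0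
        linarith
    · constructor
      · have : distFun μ₀ x ≤ min (distFun μ₀ x + ε) 1 := le_min (by linarith) h1
        linarith
      · have := min_le_left (distFun μ₀ x + ε) 1; linarith
  · have hset : {x | α ≤ distFun W.measure x} = Ici c := by
      ext x
      simp only [mem_setOf_eq, mem_Ici, hdW x]
      rw [hW, wit_apply]
      by_cases hx : x < c
      · rw [if_pos hx]
        have hFx : distFun μ₀ x < α + ε := by
          have := hmono (lt_of_lt_of_le hx hc2)
          rwa [hF2] at this
        exact iff_of_false (not_le.2 (max_lt (by linarith) hα.1)) (not_le.2 hx)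
      · rw [if_neg hx]
        have hFx : α - ε ≤ distFun μ₀ x := by
          have := hmono.monotone (hc1.trans (not_lt.1 hx))
          rwa [hF1] at this
        exact iff_of_true (le_min (by linarith) hα.2.le) (not_lt.1 hx)
    rw [lowerQuantile, hset, csInf_Ici]

theorem local_measure_kolmogorov_ball (μ₀ : Measure ℝ) [IsProbabilityMeasure μ₀]
    (hcont : Continuous (distFun μ₀)) (hmono : StrictMono (distFun μ₀))
    (α : ℝ) (hα : α ∈ Ioo (0 : ℝ) 1)
    (Lset : ℝ → Set (Measure ℝ))
    (hLset : ∀ ε : ℝ, Lset ε =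
      {μ | IsProbabilityMeasure μ ∧ ∀ x : ℝ, |distFun μ x - distFun μ₀ x| ≤ ε}) :
    (∀ ε : ℝ, 0 < ε → ε < min α (1 - α) →
      sSup ((fun μ : Measure ℝ => VaR μ α) '' Lset ε) = - lowerQuantile μ₀ (α - ε) ∧
      sInf ((fun μ : Measure ℝ => VaR μ α) '' Lset ε) = - lowerQuantile μ₀ (α + ε)) ∧
    (∀ f₀ : ℝ → ℝ, (∀ x, HasDerivAt (distFun μ₀) (f₀ x) x) →
      ContinuousAt f₀ (lowerQuantile μ₀ α) → 0 < f₀ (lowerQuantile μ₀ α) →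
      Tendsto (fun ε : ℝ =>
          (sSup ((fun μ : Measure ℝ => VaR μ α) '' Lset ε) - VaR μ₀ α) /
          (sSup ((fun μ : Measure ℝ => VaR μ α) '' Lset ε) -
            sInf ((fun μ : Measure ℝ => VaR μ α) '' Lset ε)))
        (nhdsWithin 0 (Ioi 0)) (nhds (1 / 2))) := by
  have hpart1 : ∀ ε : ℝ, 0 < ε → ε < min α (1 - α) →
      sSup ((fun μ : Measure ℝ => VaR μ α) '' Lset ε) = - lowerQuantile μ₀ (α - ε) ∧
      sInf ((fun μ : Measure ℝ => VaR μ α) '' Lset ε) = - lowerQuantile μ₀ (α + ε) := by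
    intro ε hε hεα
    obtain ⟨hεa, hεa'⟩ := lt_min_iff.1 hεα
    set xs := lowerQuantile μ₀ (α - ε) with hxs
    set xi := lowerQuantile μ₀ (α + ε) with hxi
    have hmem1 : α - ε ∈ Ioo (0:ℝ) 1 := ⟨by linarith, by linarith [hα.2]⟩
    have hmem2 : α + ε ∈ Ioo (0:ℝ) 1 := ⟨by linarith [hα.1], by linarith⟩
    have hF1 : distFun μ₀ xs = α - ε := distFun_lowerQuantile μ₀ hcont hmono hmem1
    have hF2 : distFun μ₀ xi = α + ε := distFun_lowerQuantile μ₀ hcont hmono hmem2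
    have hxsxi : xs ≤ xi := by
      refine hmono.le_iff_le.1 ?_
      rw [hF1, hF2]; linarith
    -- the general bounds for any measure in the ball
    have hub : ∀ μ ∈ Lset ε, xs ≤ lowerQuantile μ α ∧ lowerQuantile μ α ≤ xi := by
      intro μ hμ
      rw [hLset] at hμ
      obtain ⟨hp, hb⟩ := hμ
      have hSne : α ≤ distFun μ xi := by
        have := abs_le.1 (hb xi)
        rw [hF2] at this
        linarith [this.2]
      have hSbd : ∀ x ∈ {x | α ≤ distFun μ x}, xs ≤ x := by
        intro x hx
        have h1 := (abs_le.1 (hb x)).2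
        have h2 : x ∈ {x | α ≤ distFun μ x} := hx
        have h3 : α ≤ distFun μ x := h2
        have : distFun μ₀ xs ≤ distFun μ₀ x := by rw [hF1]; linarith
        exact hmono.le_iff_le.1 this
      constructor
      · exact le_csInf ⟨xi, hSne⟩ hSbd
      · exact csInf_le ⟨xs, fun x hx => hSbd x hx⟩ hSne
    -- witnesses
    obtain ⟨ν₁, hp₁, hb₁, hq₁⟩ := wit_spec μ₀ hcont hmono hα hε hεα le_rfl hxsxi
    obtain ⟨ν₂, hp₂, hb₂, hq₂⟩ := wit_spec μ₀ hcont hmono hα hε hεα hxsxi le_rfl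
    have hmem₁ : ν₁ ∈ Lset ε := by rw [hLset]; exact ⟨hp₁, hb₁⟩
    have hmem₂ : ν₂ ∈ Lset ε := by rw [hLset]; exact ⟨hp₂, hb₂⟩
    have hT₁ : -xs ∈ (fun μ : Measure ℝ => VaR μ α) '' Lset ε :=
      ⟨ν₁, hmem₁, by simp only [VaR]; rw [hq₁]⟩
    have hT₂ : -xi ∈ (fun μ : Measure ℝ => VaR μ α) '' Lset ε :=
      ⟨ν₂, hmem₂, by simp only [VaR]; rw [hq₂]⟩
    have hTub : ∀ y ∈ (fun μ : Measure ℝ => VaR μ α) '' Lset ε, y ≤ -xs := by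
      rintro y ⟨μ, hμ, rfl⟩
      simp only [VaR, neg_le_neg_iff]
      exact (hub μ hμ).1
    have hTlb : ∀ y ∈ (fun μ : Measure ℝ => VaR μ α) '' Lset ε, -xi ≤ y := by
      rintro y ⟨μ, hμ, rfl⟩
      simp only [VaR, neg_le_neg_iff]
      exact (hub μ hμ).2
    constructor
    · exact le_antisymm (csSup_le ⟨-xs, hT₁⟩ hTub) (le_csSup ⟨-xs, hTub⟩ hT₁)
    · exact le_antisymm (csInf_le ⟨-xi, hTlb⟩ hT₂) (le_csInf ⟨-xi, hT₂⟩ hTlb)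
  refine ⟨hpart1, ?_⟩
  intro f₀ hderiv hf₀cont hf₀pos
  set q := lowerQuantile μ₀ with hqdef
  set d := (f₀ (q α))⁻¹ with hd
  have hdpos : 0 < d := inv_pos.2 hf₀pos
  have hd' : HasDerivAt q d α := by
    refine HasDerivAt.of_local_left_inverse (continuousAt_lowerQuantile μ₀ hcont hmono hα)
      (hderiv (q α)) (ne_of_gt hf₀pos) ?_
    filter_upwards [isOpen_Ioo.mem_nhds hα] with β hβ
    exact distFun_lowerQuantile μ₀ hcont hmono hβ
  have hslope : Tendsto (slope q α) (𝓝[≠] α) (𝓝 d) := hasDerivAt_iff_tendsto_slope.1 hd'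
  have hplus : Tendsto (fun ε : ℝ => α + ε) (𝓝[>] (0:ℝ)) (𝓝[≠] α) := by
    refine tendsto_nhdsWithin_of_tendsto_nhds_of_eventually_within _ ?_ ?_
    · have : Tendsto (fun ε : ℝ => α + ε) (𝓝 (0:ℝ)) (𝓝 (α + 0)) :=
        (continuous_const.add continuous_id).tendsto 0
      rw [add_zero] at this
      exact this.mono_left nhdsWithin_le_nhds
    · filter_upwards [self_mem_nhdsWithin] with ε (hε : (0:ℝ) < ε)
      simp only [mem_compl_iff, mem_singleton_iff]
      intro h
      linarith [h]
  have hminus : Tendsto (fun ε : ℝ => α - ε) (𝓝[>] (0:ℝ)) (𝓝[≠] α) := by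
    refine tendsto_nhdsWithin_of_tendsto_nhds_of_eventually_within _ ?_ ?_
    · have : Tendsto (fun ε : ℝ => α - ε) (𝓝 (0:ℝ)) (𝓝 (α - 0)) :=
        (continuous_const.sub continuous_id).tendsto 0
      rw [sub_zero] at this
      exact this.mono_left nhdsWithin_le_nhds
    · filter_upwards [self_mem_nhdsWithin] with ε (hε : (0:ℝ) < ε)
      simp only [mem_compl_iff, mem_singleton_iff]
      intro h
      linarith [h]
  have h1 : Tendsto (fun ε : ℝ => (q (α + ε) - q α) / ε) (𝓝[>] (0:ℝ)) (𝓝 d) := by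
    refine Tendsto.congr (fun ε => ?_) (hslope.comp hplus)
    simp only [Function.comp_apply, slope_def_field]
    congr 1
    ring
  have h2 : Tendsto (fun ε : ℝ => (q α - q (α - ε)) / ε) (𝓝[>] (0:ℝ)) (𝓝 d) := by
    refine Tendsto.congr (fun ε => ?_) (hslope.comp hminus)
    simp only [Function.comp_apply, slope_def_field]
    rw [show α - ε - α = -ε by ring, div_neg, ← neg_div, neg_sub]
  have hden : Tendsto (fun ε : ℝ => (q α - q (α - ε)) / ε + (q (α + ε) - q α) / ε)
      (𝓝[>] (0:ℝ)) (𝓝 (d + d)) := h2.add h1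
  have hratio : Tendsto (fun ε : ℝ =>
      ((q α - q (α - ε)) / ε) / ((q α - q (α - ε)) / ε + (q (α + ε) - q α) / ε))
      (𝓝[>] (0:ℝ)) (𝓝 (d / (d + d))) := h2.div hden (by positivity)
  have hval : d / (d + d) = 1 / 2 := by
    rw [div_eq_div_iff (by linarith) two_ne_zero]
    ring
  rw [hval] at hratio
  refine hratio.congr' ?_
  have hminpos : 0 < min α (1 - α) := lt_min hα.1 (by linarith [hα.2])
  filter_upwards [Ioo_mem_nhdsGT_of_mem (⟨le_rfl, hminpos⟩ : (0:ℝ) ∈ Ico 0 (min α (1 - α)))]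
    with ε hεm
  obtain ⟨hε0, hεlt⟩ := hεm
  obtain ⟨hsup, hinf⟩ := hpart1 ε hε0 hεlt
  rw [← add_div, div_div_div_cancel_right₀ (ne_of_gt hε0)]
  rw [hsup, hinf]
  simp only [VaR]
  rw [show -q (α - ε) - -q α = q α - q (α - ε) by ring,
    show -q (α - ε) - -q (α + ε) = q α - q (α - ε) + (q (α + ε) - q α) by ring]
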